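/- Removing duplicates from a multiset of i.i.d. samples drawn with replacement from a set of distinct tagged items is a sufficient statistic: conditioned on the set of distinct sampled items, the full sample sequence is conditionally independent of the underlying collection of items. -/

import Mathlib

/-- Probability of an event `A` under the probability mass function `P` on a finite
sample space. -/
noncomputable def pr {Ω : Type*} [Fintype Ω] (P : Ω → ℝ) (A : Ω → Prop) [DecidablePred A] : ℝ :=
  ∑ ω ∈ Finset.univ.filter A, P ω

/-- Shannon entropy (in bits) of the random variable `X` under the probability mass
function `P` on a finite sample space. -/
noncomputable def ent {Ω V : Type*} [Fintype Ω] [DecidableEq V] (P : Ω → ℝ) (X : Ω → V) : ℝ :=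
  -∑ v ∈ Finset.univ.image X,
      pr P (fun ω => X ω = v) * Real.logb 2 (pr P (fun ω => X ω = v))

/-- Mutual information (in bits) I(X;Y) = H(X) + H(Y) - H(X,Y). -/
noncomputable def mi {Ω A B : Type*} [Fintype Ω] [DecidableEq A] [DecidableEq B]
    (P : Ω → ℝ) (X : Ω → A) (Y : Ω → B) : ℝ :=
  ent P X + ent P Y - ent P (fun ω => (X ω, Y ω))

open Finset

section prHelpers
variable {Ω : Type*} [Fintype Ω]

lemma pr_congr (P : Ω → ℝ) {A B : Ω → Prop} [DecidablePred A] [DecidablePred B]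
    (h : ∀ ω, A ω ↔ B ω) : pr P A = pr P B := by
  unfold pr
  congr 1
  exact Finset.filter_congr fun ω _ => h ω

lemma pr_false (P : Ω → ℝ) {A : Ω → Prop} [DecidablePred A] (h : ∀ ω, ¬ A ω) :
    pr P A = 0 := by
  unfold pr
  rw [Finset.filter_eq_empty_iff.2 fun {ω} _ => h ω, Finset.sum_empty]

lemma pr_nonneg (P : Ω → ℝ) (hP : ∀ ω, 0 ≤ P ω) (A : Ω → Prop) [DecidablePred A] :
    0 ≤ pr P A := Finset.sum_nonneg fun ω _ => hP ω

lemma pr_fiber {A : Type*} [Fintype A] [DecidableEq A] (P : Ω → ℝ)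
    (X : Ω → A) (E : Ω → Prop) [DecidablePred E] :
    pr P E = ∑ x : A, pr P (fun ω => X ω = x ∧ E ω) := by
  unfold pr
  rw [← Finset.sum_fiberwise (univ.filter E) X P]
  refine Finset.sum_congr rfl fun x _ => ?_
  rw [Finset.filter_filter]
  exact Finset.sum_congr (Finset.filter_congr fun ω _ => and_comm) fun _ _ => rfl

lemma ent_univ {V : Type*} [Fintype V] [DecidableEq V] (P : Ω → ℝ) (Z : Ω → V) :
    ent P Z = -∑ v : V, pr P (fun ω => Z ω = v) * Real.logb 2 (pr P (fun ω => Z ω = v)) := by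
  unfold ent
  congr 1
  refine Finset.sum_subset (Finset.subset_univ _) fun v _ hv => ?_
  have : pr P (fun ω => Z ω = v) = 0 := by
    apply pr_false
    intro ω hω
    exact hv (Finset.mem_image.2 ⟨ω, Finset.mem_univ ω, hω⟩)
  rw [this, zero_mul]

end prHelpers

lemma pr_prod {Ω₁ Ω₂ : Type*} [Fintype Ω₁] [Fintype Ω₂] (P₁ : Ω₁ → ℝ) (m : ℝ)
    (A : Ω₁ → Prop) (B : Ω₂ → Prop) [DecidablePred A] [DecidablePred B] :
    pr (fun p : Ω₁ × Ω₂ => P₁ p.1 / m) (fun p => A p.1 ∧ B p.2)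
    = (∑ ω ∈ univ.filter A, P₁ ω) * ((univ.filter B).card : ℝ) / m := by
  unfold pr
  have hfl : (univ : Finset (Ω₁ × Ω₂)).filter (fun p => A p.1 ∧ B p.2)
      = (univ.filter A) ×ˢ (univ.filter B) := by
    ext p
    simp [Finset.mem_product, Finset.mem_filter]
  rw [hfl, Finset.sum_product]
  simp only [Finset.sum_const, nsmul_eq_mul]
  simp only [div_eq_mul_inv]
  rw [← Finset.mul_sum, ← Finset.sum_mul]
  ring

lemma count_n {V : Type*} [DecidableEq V] {M N : ℕ} (x : Fin M → V)
    (hx : Function.Injective x) (y : Fin N → V) :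
    (univ.filter fun ι : Fin N → Fin M => ∀ i, x (ι i) = y i).card
    = if ∀ i, y i ∈ univ.image x then 1 else 0 := by
  split_ifs with h
  · have h' : ∀ i, ∃ j, x j = y i := fun i => by
      obtain ⟨j, _, hj⟩ := Finset.mem_image.1 (h i); exact ⟨j, hj⟩
    choose ι₀ hι₀ using h'
    rw [Finset.card_eq_one]
    refine ⟨ι₀, ?_⟩
    ext ι
    simp only [Finset.mem_filter, Finset.mem_univ, true_and, Finset.mem_singleton]
    constructor
    · intro hι; funext i; exact hx ((hι i).trans (hι₀ i).symm)
    · rintro rfl; exact hι₀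
  · rw [Finset.card_eq_zero, Finset.filter_eq_empty_iff]
    intro ι _ hι
    exact h fun i => Finset.mem_image.2 ⟨ι i, Finset.mem_univ _, hι i⟩

lemma count_m {V : Type*} [Fintype V] [DecidableEq V] {M N : ℕ} (x : Fin M → V)
    (hx : Function.Injective x) (s : Finset V) :
    (univ.filter fun ι : Fin N → Fin M => univ.image (fun i => x (ι i)) = s).card
    = if s ⊆ univ.image x then (univ.filter fun u : Fin N → V => univ.image u = s).card
      else 0 := by
  split_ifs with h
  · apply Finset.card_bij (fun ι _ => fun i => x (ι i))
    · intro ι hι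
      simp only [mem_filter, mem_univ, true_and] at hι ⊢
      exact hι
    · intro ι hι ι' hι' hh
      funext i
      exact hx (congrFun hh i)
    · intro u hu
      simp only [mem_filter, mem_univ, true_and] at hu
      have h'' : ∀ i, ∃ j, x j = u i := by
        intro i
        have hui : u i ∈ s := hu ▸ Finset.mem_image.2 ⟨i, mem_univ i, rfl⟩
        obtain ⟨j, _, hj⟩ := Finset.mem_image.1 (h hui)
        exact ⟨j, hj⟩
      choose ι hι using h''
      refine ⟨ι, ?_, funext hι⟩
      simp only [mem_filter, mem_univ, true_and]
      have heq : (fun i => x (ι i)) = u := funext hι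
      rw [heq, hu]
  · rw [Finset.card_eq_zero, Finset.filter_eq_empty_iff]
    intro ι _ hι
    refine h ?_
    rw [← hι]
    intro v hv
    obtain ⟨i, _, hi⟩ := Finset.mem_image.1 hv
    exact Finset.mem_image.2 ⟨ι i, mem_univ _, hi⟩

lemma key_lemma {A B C : Type*} [Fintype A] [Fintype B] [Fintype C] [DecidableEq C]
    (f : B → C) (a : A → B → ℝ) (ha : ∀ x y, 0 ≤ a x y)
    (hid : ∀ x y, a x y * (∑ x' : A, ∑ y' ∈ univ.filter fun y' => f y' = f y, a x' y')
      = (∑ y' ∈ univ.filter fun y' => f y' = f y, a x y') * (∑ x' : A, a x' y)) :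
    (∑ x : A, ∑ y : B, a x y * Real.logb 2 (a x y))
      - (∑ y : B, (∑ x : A, a x y) * Real.logb 2 (∑ x : A, a x y))
    = (∑ x : A, ∑ s : C, (∑ y ∈ univ.filter fun y => f y = s, a x y)
          * Real.logb 2 (∑ y ∈ univ.filter fun y => f y = s, a x y))
      - (∑ s : C, (∑ x : A, ∑ y ∈ univ.filter fun y => f y = s, a x y)
          * Real.logb 2 (∑ x : A, ∑ y ∈ univ.filter fun y => f y = s, a x y)) := by
  set b : B → ℝ := fun y => ∑ x : A, a x y with hb
  set c : A → C → ℝ := fun x s => ∑ y ∈ univ.filter fun y => f y = s, a x y with hc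
  set d : C → ℝ := fun s => ∑ x : A, c x s with hd
  have step : ∀ x y, a x y * (Real.logb 2 (a x y) - Real.logb 2 (b y))
      = a x y * (Real.logb 2 (c x (f y)) - Real.logb 2 (d (f y))) := by
    intro x y
    rcases eq_or_ne (a x y) 0 with h0 | h0
    · rw [h0, zero_mul, zero_mul]
    have hapos : 0 < a x y := lt_of_le_of_ne (ha x y) (Ne.symm h0)
    have hbpos : 0 < b y := lt_of_lt_of_le hapos
      (Finset.single_le_sum (f := fun x' => a x' y) (fun x' _ => ha x' y) (mem_univ x))
    have hdpos : 0 < d (f y) := by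
      have h1 : a x y ≤ c x (f y) := by
        refine Finset.single_le_sum (fun y' _ => ha x y') ?_
        simp
      have h2 : c x (f y) ≤ d (f y) := by
        refine Finset.single_le_sum (f := fun x' => c x' (f y)) (fun x' _ => ?_) (mem_univ x)
        exact Finset.sum_nonneg fun y' _ => ha x' y'
      linarith
    have hcne : c x (f y) ≠ 0 := by
      intro h
      have h2 : a x y * d (f y) = c x (f y) * b y := hid x y
      rw [h, zero_mul] at h2
      nlinarith
    have hlog : Real.logb 2 (a x y) + Real.logb 2 (d (f y))
        = Real.logb 2 (c x (f y)) + Real.logb 2 (b y) := by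
      rw [← Real.logb_mul h0 (ne_of_gt hdpos), ← Real.logb_mul hcne (ne_of_gt hbpos)]
      exact hid x y ▸ rfl
    have : Real.logb 2 (a x y) - Real.logb 2 (b y)
        = Real.logb 2 (c x (f y)) - Real.logb 2 (d (f y)) := by linarith
    rw [this]
  have regroup : ∀ x : A, ∑ y : B, a x y * (Real.logb 2 (c x (f y)) - Real.logb 2 (d (f y)))
      = ∑ s : C, c x s * (Real.logb 2 (c x s) - Real.logb 2 (d s)) := by
    intro x
    rw [← Finset.sum_fiberwise univ f
      (fun y => a x y * (Real.logb 2 (c x (f y)) - Real.logb 2 (d (f y))))]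
    refine Finset.sum_congr rfl fun s _ => ?_
    have : ∑ y ∈ univ.filter fun y => f y = s,
        a x y * (Real.logb 2 (c x (f y)) - Real.logb 2 (d (f y)))
        = ∑ y ∈ univ.filter fun y => f y = s,
        a x y * (Real.logb 2 (c x s) - Real.logb 2 (d s)) := by
      refine Finset.sum_congr rfl fun y hy => ?_
      rw [(Finset.mem_filter.1 hy).2]
    rw [this, ← Finset.sum_mul]
  have main : ∑ x : A, ∑ y : B, a x y * (Real.logb 2 (a x y) - Real.logb 2 (b y))
      = ∑ x : A, ∑ s : C, c x s * (Real.logb 2 (c x s) - Real.logb 2 (d s)) := by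
    refine Finset.sum_congr rfl fun x _ => ?_
    rw [← regroup x]
    exact Finset.sum_congr rfl fun y _ => step x y
  have lhs : ∑ x : A, ∑ y : B, a x y * (Real.logb 2 (a x y) - Real.logb 2 (b y))
      = (∑ x : A, ∑ y : B, a x y * Real.logb 2 (a x y)) - ∑ y : B, b y * Real.logb 2 (b y) := by
    have h1 : ∀ x : A, ∑ y : B, a x y * (Real.logb 2 (a x y) - Real.logb 2 (b y))
        = (∑ y : B, a x y * Real.logb 2 (a x y)) - ∑ y : B, a x y * Real.logb 2 (b y) := by
      intro x
      rw [← Finset.sum_sub_distrib]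
      exact Finset.sum_congr rfl fun y _ => by ring
    simp_rw [h1]
    rw [Finset.sum_sub_distrib]
    congr 1
    rw [Finset.sum_comm]
    refine Finset.sum_congr rfl fun y _ => ?_
    rw [← Finset.sum_mul]
  have rhs : ∀ x : A, ∑ s : C, c x s * (Real.logb 2 (c x s) - Real.logb 2 (d s))
      = (∑ s : C, c x s * Real.logb 2 (c x s)) - ∑ s : C, c x s * Real.logb 2 (d s) := by
    intro x
    rw [← Finset.sum_sub_distrib]
    exact Finset.sum_congr rfl fun s _ => by ring
  have rhs' : ∑ x : A, ∑ s : C, c x s * (Real.logb 2 (c x s) - Real.logb 2 (d s))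
      = (∑ x : A, ∑ s : C, c x s * Real.logb 2 (c x s)) - ∑ s : C, d s * Real.logb 2 (d s) := by
    simp_rw [rhs]
    rw [Finset.sum_sub_distrib]
    congr 1
    rw [Finset.sum_comm]
    refine Finset.sum_congr rfl fun s _ => ?_
    rw [← Finset.sum_mul]
  rw [lhs, rhs'] at main
  linarith

/-- Removing duplicates from i.i.d. samples (with replacement) of a collection of
a.s. distinct tagged items is a sufficient statistic: the information the samples
Y = (x_{I_1},...,x_{I_N}) carry about X = (x_1,...,x_M) is the same as that carried
by the set S of distinct sampled values, i.e. I(X;Y) = I(X;S). The sample space is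
Ω₀ × (Fin N → Fin M), with the indices uniform and independent of X. -/
theorem stmt10 {Ω₀ V : Type*} [Fintype Ω₀] [Fintype V] [DecidableEq V]
    (M N : ℕ) (hM : 1 ≤ M) (hN : 1 ≤ N)
    (P₀ : Ω₀ → ℝ) (hP₀ : ∀ ω, 0 ≤ P₀ ω) (hsum : ∑ ω, P₀ ω = 1)
    (X : Ω₀ → Fin M → V) (hdist : ∀ ω, P₀ ω ≠ 0 → Function.Injective (X ω)) :
    mi (fun p : Ω₀ × (Fin N → Fin M) => P₀ p.1 / (M : ℝ) ^ N)
        (fun p => X p.1)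
        (fun p => fun i => X p.1 (p.2 i))
      = mi (fun p : Ω₀ × (Fin N → Fin M) => P₀ p.1 / (M : ℝ) ^ N)
        (fun p => X p.1)
        (fun p => Finset.univ.image (fun i => X p.1 (p.2 i))) := by
  set P : Ω₀ × (Fin N → Fin M) → ℝ := fun p => P₀ p.1 / (M : ℝ) ^ N with hPdef
  have hPnn : ∀ p, 0 ≤ P p := fun p =>
    div_nonneg (hP₀ p.1) (pow_nonneg (Nat.cast_nonneg M) N)
  -- the joint pmf of (X, Y)
  set a : (Fin M → V) → (Fin N → V) → ℝ :=
    fun x y => pr P (fun p => X p.1 = x ∧ (fun i => X p.1 (p.2 i)) = y) with hadef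
  set q : (Fin M → V) → ℝ := fun x => ∑ ω ∈ univ.filter (fun ω => X ω = x), P₀ ω with hqdef
  set nn : (Fin M → V) → (Fin N → V) → ℝ := fun x y =>
    ((univ.filter fun ι : Fin N → Fin M => ∀ i, x (ι i) = y i).card : ℝ) with hnndef
  set mm : (Fin M → V) → Finset V → ℝ := fun x s =>
    ((univ.filter fun ι : Fin N → Fin M => univ.image (fun i => x (ι i)) = s).card : ℝ)
      with hmmdef
  set cc : Finset V → ℝ := fun s =>
    ((univ.filter fun u : Fin N → V => univ.image u = s).card : ℝ) with hccdef
  -- formula for a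
  have ha1 : ∀ x y, a x y = q x * nn x y / (M : ℝ) ^ N := by
    intro x y
    have hcg : a x y = pr P (fun p => X p.1 = x ∧ (∀ i, x (p.2 i) = y i)) := by
      refine pr_congr P fun p => ?_
      constructor
      · rintro ⟨h1, h2⟩
        exact ⟨h1, fun i => by rw [← h1]; exact congrFun h2 i⟩
      · rintro ⟨h1, h2⟩
        refine ⟨h1, funext fun i => ?_⟩
        rw [h1]; exact h2 i
    rw [hcg]
    exact pr_prod P₀ ((M : ℝ) ^ N) (fun ω => X ω = x) (fun ι : Fin N → Fin M => ∀ i, x (ι i) = y i)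
  -- formula for the (X,S) joint pmf
  have hc1 : ∀ x s, pr P (fun p => X p.1 = x ∧ univ.image (fun i => X p.1 (p.2 i)) = s)
      = q x * mm x s / (M : ℝ) ^ N := by
    intro x s
    have hcg : pr P (fun p => X p.1 = x ∧ univ.image (fun i => X p.1 (p.2 i)) = s)
        = pr P (fun p => X p.1 = x ∧ univ.image (fun i => x (p.2 i)) = s) := by
      refine pr_congr P fun p => ?_
      constructor
      · rintro ⟨h1, h2⟩
        refine ⟨h1, ?_⟩
        have he : (fun i => X p.1 (p.2 i)) = fun i => x (p.2 i) := by
          funext i; rw [h1]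
        rw [← he]; exact h2
      · rintro ⟨h1, h2⟩
        refine ⟨h1, ?_⟩
        have he : (fun i => X p.1 (p.2 i)) = fun i => x (p.2 i) := by
          funext i; rw [h1]
        rw [he]; exact h2
    rw [hcg]
    exact pr_prod P₀ ((M : ℝ) ^ N) (fun ω => X ω = x)
      (fun ι : Fin N → Fin M => univ.image (fun i => x (ι i)) = s)
  -- marginal of Y as sum of a
  have hbsum : ∀ y, pr P (fun p => (fun i => X p.1 (p.2 i)) = y)
      = ∑ x : Fin M → V, a x y := by
    intro y
    exact pr_fiber P (fun p => X p.1) (fun p => (fun i => X p.1 (p.2 i)) = y)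
  -- (X,S) joint pmf as fiber sum of a
  have hcsum : ∀ x s, pr P (fun p => X p.1 = x ∧ univ.image (fun i => X p.1 (p.2 i)) = s)
      = ∑ y ∈ univ.filter (fun y : Fin N → V => univ.image y = s), a x y := by
    intro x s
    have step1 : pr P (fun p => X p.1 = x ∧ univ.image (fun i => X p.1 (p.2 i)) = s)
        = ∑ y : Fin N → V, pr P (fun p => (fun i => X p.1 (p.2 i)) = y
            ∧ (X p.1 = x ∧ univ.image (fun i => X p.1 (p.2 i)) = s)) :=
      pr_fiber P (fun p => fun i => X p.1 (p.2 i)) _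
    rw [step1]
    have step2 : ∀ y : Fin N → V, pr P (fun p => (fun i => X p.1 (p.2 i)) = y
        ∧ (X p.1 = x ∧ univ.image (fun i => X p.1 (p.2 i)) = s))
        = if univ.image y = s then a x y else 0 := by
      intro y
      by_cases hys : univ.image y = s
      · rw [if_pos hys]
        refine pr_congr P fun p => ?_
        constructor
        · rintro ⟨h1, h2, _⟩; exact ⟨h2, h1⟩
        · rintro ⟨h2, h1⟩
          refine ⟨h1, h2, ?_⟩
          rw [h1]; exact hys
      · rw [if_neg hys]
        refine pr_false P fun p => ?_
        rintro ⟨h1, _, h3⟩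
        exact hys (by rw [← h1]; exact h3)
    rw [Finset.sum_congr rfl fun y _ => step2 y]
    exact (Finset.sum_filter _ _).symm
  -- marginal of S as double sum of a
  have hdsum : ∀ s, pr P (fun p => univ.image (fun i => X p.1 (p.2 i)) = s)
      = ∑ x : Fin M → V, ∑ y ∈ univ.filter (fun y : Fin N → V => univ.image y = s), a x y := by
    intro s
    rw [pr_fiber P (fun p => X p.1) (fun p => univ.image (fun i => X p.1 (p.2 i)) = s)]
    exact Finset.sum_congr rfl fun x _ => hcsum x s
  -- injectivity from positive q
  have hqinj : ∀ x, q x ≠ 0 → Function.Injective x := by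
    intro x hx
    obtain ⟨ω, hmem, hne⟩ := Finset.exists_ne_zero_of_sum_ne_zero hx
    have hxe : X ω = x := (Finset.mem_filter.1 hmem).2
    exact hxe ▸ hdist ω hne
  -- key counting identity
  have hqnm : ∀ (x : Fin M → V) (y : Fin N → V),
      q x * mm x (univ.image y) = q x * (nn x y * cc (univ.image y)) := by
    intro x y
    rcases eq_or_ne (q x) 0 with h | h
    · rw [h, zero_mul, zero_mul]
    have hinj := hqinj x h
    congr 1
    have h1 := count_m (N := N) x hinj (univ.image y)
    have h2 := count_n x hinj y
    rw [hmmdef, hnndef, hccdef]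
    simp only
    rw [h1, h2]
    by_cases hss : univ.image y ⊆ univ.image x
    · have hall : ∀ i, y i ∈ univ.image x := fun i =>
        hss (Finset.mem_image.2 ⟨i, mem_univ _, rfl⟩)
      rw [if_pos hss, if_pos hall]
      push_cast; ring
    · have hnall : ¬ ∀ i, y i ∈ univ.image x := fun hc =>
        hss (Finset.image_subset_iff.2 fun i _ => hc i)
      rw [if_neg hss, if_neg hnall]
      push_cast; ring
  -- conditional independence product identity
  have hid : ∀ (x : Fin M → V) (y : Fin N → V),
      a x y * (∑ x' : Fin M → V, ∑ y' ∈ univ.filter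
          fun y' : Fin N → V => univ.image y' = univ.image y, a x' y')
      = (∑ y' ∈ univ.filter fun y' : Fin N → V => univ.image y' = univ.image y, a x y')
        * (∑ x' : Fin M → V, a x' y) := by
    intro x y
    have hfc : ∀ x' : Fin M → V,
        (∑ y' ∈ univ.filter fun y' : Fin N → V => univ.image y' = univ.image y, a x' y')
        = q x' * mm x' (univ.image y) / (M : ℝ) ^ N := by
      intro x'
      rw [← hcsum x' (univ.image y), hc1 x' (univ.image y)]
    rw [hfc x]
    have hsum1 : (∑ x' : Fin M → V, ∑ y' ∈ univ.filter
          fun y' : Fin N → V => univ.image y' = univ.image y, a x' y')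
        = ∑ x' : Fin M → V, q x' * (nn x' y * cc (univ.image y)) / (M : ℝ) ^ N := by
      refine Finset.sum_congr rfl fun x' _ => ?_
      rw [hfc x', hqnm x' y]
    rw [hsum1]
    have hsum2 : (∑ x' : Fin M → V, a x' y)
        = ∑ x' : Fin M → V, q x' * nn x' y / (M : ℝ) ^ N :=
      Finset.sum_congr rfl fun x' _ => ha1 x' y
    rw [hsum2, ha1 x y, hqnm x y]
    have hpull : (∑ x' : Fin M → V, q x' * (nn x' y * cc (univ.image y)) / (M : ℝ) ^ N)
        = cc (univ.image y) * ∑ x' : Fin M → V, q x' * nn x' y / (M : ℝ) ^ N := by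
      rw [Finset.mul_sum]
      exact Finset.sum_congr rfl fun x' _ => by ring
    rw [hpull]
    ring
  -- apply the key lemma
  have hkey := key_lemma (fun y : Fin N → V => (univ.image y : Finset V)) a
    (fun x y => pr_nonneg P hPnn _) hid
  -- entropy computations
  have e1 : ent P (fun p : Ω₀ × (Fin N → Fin M) => fun i => X p.1 (p.2 i))
      = -∑ y : Fin N → V, (∑ x : Fin M → V, a x y)
          * Real.logb 2 (∑ x : Fin M → V, a x y) := by
    rw [ent_univ]
    congr 1
    refine Finset.sum_congr rfl fun y _ => ?_
    rw [hbsum y]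
  have e2 : ent P (fun p : Ω₀ × (Fin N → Fin M) => (X p.1, fun i => X p.1 (p.2 i)))
      = -∑ x : Fin M → V, ∑ y : Fin N → V, a x y * Real.logb 2 (a x y) := by
    rw [ent_univ, Fintype.sum_prod_type]
    congr 1
    refine Finset.sum_congr rfl fun x _ => Finset.sum_congr rfl fun y _ => ?_
    have : pr P (fun p => ((X p.1, fun i => X p.1 (p.2 i))
          : (Fin M → V) × (Fin N → V)) = (x, y)) = a x y := by
      refine pr_congr P fun p => ?_
      rw [Prod.ext_iff]
    rw [this]
  have e3 : ent P (fun p : Ω₀ × (Fin N → Fin M) => univ.image (fun i => X p.1 (p.2 i)))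
      = -∑ s : Finset V, (∑ x : Fin M → V, ∑ y ∈ univ.filter
            (fun y : Fin N → V => univ.image y = s), a x y)
          * Real.logb 2 (∑ x : Fin M → V, ∑ y ∈ univ.filter
            (fun y : Fin N → V => univ.image y = s), a x y) := by
    rw [ent_univ]
    congr 1
    refine Finset.sum_congr rfl fun s _ => ?_
    rw [hdsum s]
  have e4 : ent P (fun p : Ω₀ × (Fin N → Fin M) =>
        (X p.1, univ.image (fun i => X p.1 (p.2 i))))
      = -∑ x : Fin M → V, ∑ s : Finset V, (∑ y ∈ univ.filter
            (fun y : Fin N → V => univ.image y = s), a x y)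
          * Real.logb 2 (∑ y ∈ univ.filter
            (fun y : Fin N → V => univ.image y = s), a x y) := by
    rw [ent_univ, Fintype.sum_prod_type]
    congr 1
    refine Finset.sum_congr rfl fun x _ => Finset.sum_congr rfl fun s _ => ?_
    have : pr P (fun p => ((X p.1, univ.image (fun i => X p.1 (p.2 i)))
          : (Fin M → V) × Finset V) = (x, s)) =
        pr P (fun p => X p.1 = x ∧ univ.image (fun i => X p.1 (p.2 i)) = s) := by
      refine pr_congr P fun p => ?_
      rw [Prod.ext_iff]
    rw [this, hcsum x s]
  unfold mi
  rw [e1, e2, e3, e4]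
  linarith [hkey]
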